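/- L² law of large numbers for quadratic forms with uniformly bounded matrices. For each n, let B_n be an n×n real matrix with ‖B_n‖_1 ≤ c and ‖B_n‖_∞ ≤ c for a constant c not depending on n, and let V_n = (v_1,…,v_n)' have i.i.d. entries with E v_i = 0, E v_i² = σ², E v_i⁴ = μ4 < ∞. Then Var(V_n'B_nV_n) ≤ (|μ4 − 3σ⁴| + 2σ⁴)·c²·n, so E[((1/n)(V_n'B_nV_n − σ²·tr B_n))²] ≤ (|μ4 − 3σ⁴| + 2σ⁴)·c²/n → 0; in particular (1/n)(V_n'B_nV_n − σ²·tr B_n) converges to 0 in probability as n → ∞. -/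

import Mathlib

open Matrix MeasureTheory ProbabilityTheory Filter Topology

/-- Maximum absolute row-sum norm `‖·‖_∞`. -/
noncomputable def rowSumNorm {m n : Type*} [Fintype n] (A : Matrix m n ℝ) : ℝ :=
  ⨆ i, ∑ j, |A i j|

/-- Maximum absolute column-sum norm `‖·‖_1`. -/
noncomputable def colSumNorm {m n : Type*} [Fintype m] (A : Matrix m n ℝ) : ℝ :=
  ⨆ j, ∑ i, |A i j|

open scoped ENNReal NNReal

section helpers
variable {Ω : Type*} [MeasureSpace Ω] [IsProbabilityMeasure (volume : Measure Ω)]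
  {v : ℕ → Ω → ℝ} {σ2 μ4 : ℝ}

theorem half_eq : (1:ℝ≥0∞)/2 = 1/4 + 1/4 := by
  rw [ENNReal.div_add_div_same, ENNReal.div_eq_div_iff] <;> norm_num

theorem mul2 (hL4 : ∀ i, MemLp (v i) 4 volume) (i j : ℕ) :
    MemLp (fun ω => v i ω * v j ω) 2 volume := by
  haveI : ENNReal.HolderTriple 4 4 2 := ⟨by have := half_eq; simp only [one_div] at this; exact this.symm⟩
  exact (hL4 j).mul' (hL4 i)

theorem int2 (hL4 : ∀ i, MemLp (v i) 4 volume) (i j : ℕ) :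
    Integrable (fun ω => v i ω * v j ω) volume :=
  (mul2 hL4 i j).integrable one_le_two

theorem int4 (hL4 : ∀ i, MemLp (v i) 4 volume) (i j k l : ℕ) :
    Integrable (fun ω => v i ω * v j ω * v k ω * v l ω) volume := by
  have h : MemLp (fun ω => (v i ω * v j ω) * (v k ω * v l ω)) 1 volume :=
    haveI : ENNReal.HolderTriple 2 2 1 := ⟨by rw [inv_one, ENNReal.inv_two_add_inv_two]⟩
    (mul2 hL4 k l).mul' (mul2 hL4 i j)
  have := memLp_one_iff_integrable.mp h
  simpa [mul_assoc] using this

set_option linter.unusedSectionVars false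

variable (hmeas : ∀ i, Measurable (v i))
  (hindep : iIndepFun v volume)
  (hL4 : ∀ i, MemLp (v i) 4 volume)
  (hmean : ∀ i, (∫ ω, v i ω) = 0)
  (hvar : ∀ i, (∫ ω, (v i ω) ^ 2) = σ2)
  (hm4 : ∀ i, (∫ ω, (v i ω) ^ 4) = μ4)

include hmeas hindep hL4 hmean hvar hm4

theorem E2 (i j : ℕ) : (∫ ω, v i ω * v j ω) = if i = j then σ2 else 0 := by
  rcases eq_or_ne i j with rfl | hne
  · rw [if_pos rfl, ← hvar i]
    congr 1; funext ω; ring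
  · rw [if_neg hne,
      (hindep.indepFun hne).integral_fun_mul_eq_mul_integral (hmeas i).aestronglyMeasurable
        (hmeas j).aestronglyMeasurable, hmean i, zero_mul]

theorem pairE (a b c d : ℕ) (hac : a ≠ c) (had : a ≠ d) (hbc : b ≠ c) (hbd : b ≠ d) :
    (∫ ω, v a ω * v b ω * (v c ω * v d ω)) = (∫ ω, v a ω * v b ω) * ∫ ω, v c ω * v d ω :=
  (hindep.indepFun_mul_mul hmeas a b c d hac had hbc hbd).integral_fun_mul_eq_mul_integral
    ((hmeas a).mul (hmeas b)).aestronglyMeasurable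
    ((hmeas c).mul (hmeas d)).aestronglyMeasurable

theorem Epair2 (a b : ℕ) (hab : a ≠ b) :
    (∫ ω, v a ω * v a ω * (v b ω * v b ω)) = σ2 ^ 2 := by
  rw [pairE hmeas hindep hL4 hmean hvar hm4 a a b b hab hab hab hab,
    E2 hmeas hindep hL4 hmean hvar hm4, E2 hmeas hindep hL4 hmean hvar hm4]
  simp [sq]

theorem vanish (a b c d : ℕ) (h1 : a ≠ d) (h2 : b ≠ d) (h3 : c ≠ d) :
    (∫ ω, v a ω * v b ω * v c ω * v d ω) = 0 := by
  classical
  have hdis : Disjoint ({a, b, c} : Finset ℕ) {d} := by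
    simp [Finset.disjoint_left, h1, h2, h3]
  have h := hindep.indepFun_finset {a, b, c} {d} hdis hmeas
  have ha : a ∈ ({a, b, c} : Finset ℕ) := by simp
  have hb : b ∈ ({a, b, c} : Finset ℕ) := by simp
  have hc : c ∈ ({a, b, c} : Finset ℕ) := by simp
  have hd : d ∈ ({d} : Finset ℕ) := by simp
  have hφm : Measurable (fun p : (∀ _ : ({a, b, c} : Finset ℕ), ℝ) =>
      p ⟨a, ha⟩ * p ⟨b, hb⟩ * p ⟨c, hc⟩) :=
    by fun_prop
  have hψm : Measurable (fun p : (∀ _ : ({d} : Finset ℕ), ℝ) => p ⟨d, hd⟩) :=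
    by fun_prop
  have h2' := (h.comp hφm hψm).integral_fun_mul_eq_mul_integral
    (X := fun ω => v a ω * v b ω * v c ω)
    (Y := fun ω => v d ω)
    (((hmeas a).mul (hmeas b)).mul (hmeas c)).aestronglyMeasurable
    (hmeas d).aestronglyMeasurable
  calc (∫ ω, v a ω * v b ω * v c ω * v d ω)
      = (∫ ω, v a ω * v b ω * v c ω) * ∫ ω, v d ω := h2'
    _ = 0 := by rw [hmean d, mul_zero]

theorem E4 (i j k l : ℕ) :
    (∫ ω, v i ω * v j ω * v k ω * v l ω)
      = (if i = j ∧ k = l ∧ i = k then μ4 else 0)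
      + (if i = j ∧ k = l ∧ i ≠ k then σ2 ^ 2 else 0)
      + (if i = k ∧ j = l ∧ i ≠ j then σ2 ^ 2 else 0)
      + (if i = l ∧ j = k ∧ i ≠ j then σ2 ^ 2 else 0) := by
  have V := vanish hmeas hindep hL4 hmean hvar hm4
  have P := Epair2 hmeas hindep hL4 hmean hvar hm4
  by_cases hij : i = j
  · subst hij
    by_cases hkl : k = l
    · subst hkl
      by_cases hik : i = k
      · subst hik
        have hR : (if i = i ∧ i = i ∧ i = i then μ4 else 0)
            + (if i = i ∧ i = i ∧ i ≠ i then σ2 ^ 2 else 0)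
            + (if i = i ∧ i = i ∧ i ≠ i then σ2 ^ 2 else 0)
            + (if i = i ∧ i = i ∧ i ≠ i then σ2 ^ 2 else 0) = μ4 := by simp
        rw [hR, ← hm4 i]
        congr 1; funext ω; ring
      · have h1 : (∫ ω, v i ω * v i ω * v k ω * v k ω)
            = ∫ ω, v i ω * v i ω * (v k ω * v k ω) := by congr 1; funext ω; ring
        rw [h1, P i k hik]
        simp [hik, Ne.symm hik]
    · -- k ≠ l, i = j
      have hRHS : (if i = i ∧ k = l ∧ i = k then μ4 else 0)
          + (if i = i ∧ k = l ∧ i ≠ k then σ2 ^ 2 else 0)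
          + (if i = k ∧ i = l ∧ i ≠ i then σ2 ^ 2 else 0)
          + (if i = l ∧ i = k ∧ i ≠ i then σ2 ^ 2 else 0) = 0 := by simp [hkl]
      rw [hRHS]
      by_cases hil : i = l
      · subst hil
        have h1 : (∫ ω, v i ω * v i ω * v k ω * v i ω)
            = ∫ ω, v i ω * v i ω * v i ω * v k ω := by congr 1; funext ω; ring
        rw [h1]; exact V i i i k (fun h => hkl h.symm) (fun h => hkl h.symm) (fun h => hkl h.symm)
      · exact V i i k l hil hil hkl
  · by_cases hkl : k = l
    · subst hkl
      have hRHS : (if i = j ∧ k = k ∧ i = k then μ4 else 0)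
          + (if i = j ∧ k = k ∧ i ≠ k then σ2 ^ 2 else 0)
          + (if i = k ∧ j = k ∧ i ≠ j then σ2 ^ 2 else 0)
          + (if i = k ∧ j = k ∧ i ≠ j then σ2 ^ 2 else 0) = 0 := by
        by_cases hik : i = k
        · by_cases hjk : j = k
          · exact absurd (hik.trans hjk.symm) hij
          · simp [hij, hjk]
        · simp [hij, hik]
      rw [hRHS]
      by_cases hik : i = k
      · subst hik
        have h1 : (∫ ω, v i ω * v j ω * v i ω * v i ω)
            = ∫ ω, v i ω * v i ω * v i ω * v j ω := by congr 1; funext ω; ring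
        rw [h1]; exact V i i i j hij hij hij
      · by_cases hjk : j = k
        · subst hjk
          have h1 : (∫ ω, v i ω * v j ω * v j ω * v j ω)
              = ∫ ω, v j ω * v j ω * v j ω * v i ω := by congr 1; funext ω; ring
          rw [h1]
          exact V j j j i (fun h => hij h.symm) (fun h => hij h.symm) (fun h => hij h.symm)
        · have h1 : (∫ ω, v i ω * v j ω * v k ω * v k ω)
              = ∫ ω, v j ω * v k ω * v k ω * v i ω := by congr 1; funext ω; ring
          rw [h1]
          exact V j k k i (fun h => hij h.symm) (fun h => hik h.symm) (fun h => hik h.symm)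
    · -- i ≠ j, k ≠ l
      by_cases hik : i = k
      · subst hik
        by_cases hjl : j = l
        · subst hjl
          have h1 : (∫ ω, v i ω * v j ω * v i ω * v j ω)
              = ∫ ω, v i ω * v i ω * (v j ω * v j ω) := by congr 1; funext ω; ring
          rw [h1, P i j hij]
          simp [hij, hkl, Ne.symm hij]
        · rw [V i j i l (fun h => hkl h) hjl (fun h => hkl h)]
          simp [hij, hkl, hjl]
      · by_cases hil : i = l
        · subst hil
          by_cases hjk : j = k
          · subst hjk
            have h1 : (∫ ω, v i ω * v j ω * v j ω * v i ω)
                = ∫ ω, v i ω * v i ω * (v j ω * v j ω) := by congr 1; funext ω; ring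
            rw [h1, P i j hij]
            simp [hij, hik, hkl]
          · have h1 : (∫ ω, v i ω * v j ω * v k ω * v i ω)
                = ∫ ω, v i ω * v j ω * v i ω * v k ω := by congr 1; funext ω; ring
            rw [h1, V i j i k hik (fun h => hjk h) hik]
            simp [hij, hik, hjk]
        · have h1 : (∫ ω, v i ω * v j ω * v k ω * v l ω)
              = ∫ ω, v j ω * v k ω * v l ω * v i ω := by congr 1; funext ω; ring
          rw [h1, V j k l i (fun h => hij h.symm) (fun h => hik h.symm) (fun h => hil h.symm)]
          simp [hij, hik, hil]

omit hmeas hindep hL4 hmean hvar hm4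

theorem sumlem1 (n : ℕ) (M : Matrix (Fin n) (Fin n) ℝ) (r : ℝ) :
    ∑ p : Fin n × Fin n, ∑ q : Fin n × Fin n, (M p.1 p.2 * M q.1 q.2) *
      (if (p.1:ℕ) = p.2 ∧ (q.1:ℕ) = q.2 ∧ (p.1:ℕ) = q.1 then r else 0)
    = r * ∑ i, M i i ^ 2 := by
  simp only [Fin.val_inj, Fintype.sum_prod_type, mul_ite, mul_zero, ite_and]
  simp [Finset.sum_ite_eq, Finset.sum_ite_eq', Finset.mul_sum]
  exact Finset.sum_congr rfl fun i _ => by ring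

theorem sumlem2 (n : ℕ) (M : Matrix (Fin n) (Fin n) ℝ) (r : ℝ) :
    ∑ p : Fin n × Fin n, ∑ q : Fin n × Fin n, (M p.1 p.2 * M q.1 q.2) *
      (if (p.1:ℕ) = q.1 ∧ (p.2:ℕ) = q.2 then r else 0)
    = r * ∑ p : Fin n × Fin n, M p.1 p.2 ^ 2 := by
  simp only [Fin.val_inj, Fintype.sum_prod_type, mul_ite, mul_zero, ite_and]
  simp [Finset.sum_ite_eq, Finset.sum_ite_eq', Finset.mul_sum]
  exact Finset.sum_congr rfl fun i _ => Finset.sum_congr rfl fun j _ => by ring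

theorem sumlem3 (n : ℕ) (M : Matrix (Fin n) (Fin n) ℝ) (r : ℝ) :
    ∑ p : Fin n × Fin n, ∑ q : Fin n × Fin n, (M p.1 p.2 * M q.1 q.2) *
      (if (p.1:ℕ) = q.2 ∧ (p.2:ℕ) = q.1 then r else 0)
    = r * ∑ p : Fin n × Fin n, M p.1 p.2 * M p.2 p.1 := by
  simp only [Fin.val_inj, Fintype.sum_prod_type, mul_ite, mul_zero, ite_and]
  simp [Finset.sum_ite_eq, Finset.sum_ite_eq', Finset.mul_sum]
  exact Finset.sum_congr rfl fun i _ => Finset.sum_congr rfl fun j _ => by ring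

theorem sumlem4 (n : ℕ) (M : Matrix (Fin n) (Fin n) ℝ) (s : ℝ) :
    ∑ p : Fin n × Fin n, ∑ q : Fin n × Fin n, (M p.1 p.2 * M q.1 q.2) *
      ((if (p.1:ℕ) = p.2 then s else 0) * (if (q.1:ℕ) = q.2 then s else 0))
    = (s * ∑ i, M i i) ^ 2 := by
  simp only [Fin.val_inj, Fintype.sum_prod_type, mul_ite, mul_zero, ite_and, ite_mul, zero_mul]
  simp [Finset.sum_ite_eq, Finset.sum_ite_eq', Finset.mul_sum, Finset.sum_mul]
  rw [sq, Finset.sum_mul_sum]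
  exact Finset.sum_congr rfl fun i _ => Finset.sum_congr rfl fun j _ => by ring

theorem E4split (σ2 μ4 : ℝ) (i j k l : ℕ) :
    (if i = j ∧ k = l ∧ i = k then μ4 else 0) + (if i = j ∧ k = l ∧ i ≠ k then σ2 ^ 2 else 0)
      + (if i = k ∧ j = l ∧ i ≠ j then σ2 ^ 2 else 0)
      + (if i = l ∧ j = k ∧ i ≠ j then σ2 ^ 2 else 0)
    = (if i = j ∧ k = l ∧ i = k then μ4 - 3 * σ2 ^ 2 else 0)
      + (if i = k ∧ j = l then σ2 ^ 2 else 0)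
      + (if i = l ∧ j = k then σ2 ^ 2 else 0)
      + (if i = j then σ2 else 0) * (if k = l then σ2 else 0) := by
  by_cases hij : i = j <;> by_cases hkl : k = l <;> by_cases hik : i = k <;>
    by_cases hil : i = l <;> by_cases hjk : j = k <;> by_cases hjl : j = l <;>
    simp_all <;> ring

include hmeas hindep hL4 hmean hvar hm4

theorem memQ (n : ℕ) (M : Matrix (Fin n) (Fin n) ℝ) :
    MemLp (fun ω => ∑ p : Fin n × Fin n, M p.1 p.2 * (v p.1 ω * v p.2 ω)) 2 volume :=
  memLp_finset_sum (μ := volume) Finset.univ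
    (f := fun (p : Fin n × Fin n) => fun ω => M p.1 p.2 * (v p.1 ω * v p.2 ω))
    (fun p _ => (mul2 hL4 p.1 p.2).const_mul (M p.1 p.2))

theorem intQ (n : ℕ) (M : Matrix (Fin n) (Fin n) ℝ) :
    Integrable (fun ω => ∑ p : Fin n × Fin n, M p.1 p.2 * (v p.1 ω * v p.2 ω)) volume :=
  (memQ hmeas hindep hL4 hmean hvar hm4 n M).integrable one_le_two

theorem meanQ (n : ℕ) (M : Matrix (Fin n) (Fin n) ℝ) :
    (∫ ω, ∑ p : Fin n × Fin n, M p.1 p.2 * (v p.1 ω * v p.2 ω)) = σ2 * ∑ i, M i i := by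
  rw [integral_finset_sum _ fun p _ => ((int2 hL4 p.1 p.2).const_mul (M p.1 p.2))]
  have : ∀ p : Fin n × Fin n, (∫ ω, M p.1 p.2 * (v p.1 ω * v p.2 ω))
      = M p.1 p.2 * (if (p.1:ℕ) = p.2 then σ2 else 0) := by
    intro p
    rw [integral_const_mul, E2 hmeas hindep hL4 hmean hvar hm4]
  rw [Finset.sum_congr rfl fun p _ => this p]
  simp only [Fin.val_inj, Fintype.sum_prod_type, mul_ite, mul_zero]
  simp [Finset.sum_ite_eq, Finset.sum_ite_eq', Finset.mul_sum]
  exact Finset.sum_congr rfl fun i _ => mul_comm _ _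

theorem sqQ (n : ℕ) (M : Matrix (Fin n) (Fin n) ℝ) :
    (∫ ω, (∑ p : Fin n × Fin n, M p.1 p.2 * (v p.1 ω * v p.2 ω)) ^ 2)
      = ∑ p : Fin n × Fin n, ∑ q : Fin n × Fin n, (M p.1 p.2 * M q.1 q.2) *
          ∫ ω, v p.1 ω * v p.2 ω * v q.1 ω * v q.2 ω := by
  have hsq : (fun ω => (∑ p : Fin n × Fin n, M p.1 p.2 * (v p.1 ω * v p.2 ω)) ^ 2)
      = fun ω => ∑ p : Fin n × Fin n, ∑ q : Fin n × Fin n, (M p.1 p.2 * M q.1 q.2) *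
          (v p.1 ω * v p.2 ω * v q.1 ω * v q.2 ω) := by
    funext ω
    rw [sq, Finset.sum_mul_sum]
    exact Finset.sum_congr rfl fun p _ => Finset.sum_congr rfl fun q _ => by ring
  rw [hsq, integral_finset_sum _ fun p _ => integrable_finset_sum _ fun q _ =>
    ((int4 hL4 p.1 p.2 q.1 q.2).const_mul _)]
  exact Finset.sum_congr rfl fun p _ => by
    rw [integral_finset_sum _ fun q _ => ((int4 hL4 p.1 p.2 q.1 q.2).const_mul _)]
    exact Finset.sum_congr rfl fun q _ => integral_const_mul _ _

theorem varQ (n : ℕ) (M : Matrix (Fin n) (Fin n) ℝ) :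
    variance (fun ω => ∑ p : Fin n × Fin n, M p.1 p.2 * (v p.1 ω * v p.2 ω)) volume
      = (μ4 - 3 * σ2 ^ 2) * ∑ i, M i i ^ 2
        + σ2 ^ 2 * ∑ p : Fin n × Fin n, M p.1 p.2 ^ 2
        + σ2 ^ 2 * ∑ p : Fin n × Fin n, M p.1 p.2 * M p.2 p.1 := by
  rw [variance_eq_sub (memQ hmeas hindep hL4 hmean hvar hm4 n M)]
  have h1 : (∫ ω, ((fun ω => ∑ p : Fin n × Fin n, M p.1 p.2 * (v p.1 ω * v p.2 ω)) ^ 2) ω)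
      = ∑ p : Fin n × Fin n, ∑ q : Fin n × Fin n, (M p.1 p.2 * M q.1 q.2) *
          ∫ ω, v p.1 ω * v p.2 ω * v q.1 ω * v q.2 ω := by
    simp only [Pi.pow_apply]
    exact sqQ hmeas hindep hL4 hmean hvar hm4 n M
  have h2 : (∫ ω, (fun ω => ∑ p : Fin n × Fin n, M p.1 p.2 * (v p.1 ω * v p.2 ω)) ω)
      = σ2 * ∑ i, M i i := meanQ hmeas hindep hL4 hmean hvar hm4 n M
  rw [h1, h2]
  have h3 : ∀ p q : Fin n × Fin n, (M p.1 p.2 * M q.1 q.2) *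
        (∫ ω, v p.1 ω * v p.2 ω * v q.1 ω * v q.2 ω)
      = (M p.1 p.2 * M q.1 q.2) *
          (if (p.1:ℕ) = p.2 ∧ (q.1:ℕ) = q.2 ∧ (p.1:ℕ) = q.1 then μ4 - 3 * σ2 ^ 2 else 0)
        + (M p.1 p.2 * M q.1 q.2) * (if (p.1:ℕ) = q.1 ∧ (p.2:ℕ) = q.2 then σ2 ^ 2 else 0)
        + (M p.1 p.2 * M q.1 q.2) * (if (p.1:ℕ) = q.2 ∧ (p.2:ℕ) = q.1 then σ2 ^ 2 else 0)
        + (M p.1 p.2 * M q.1 q.2) *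
            ((if (p.1:ℕ) = p.2 then σ2 else 0) * (if (q.1:ℕ) = q.2 then σ2 else 0)) := by
    intro p q
    rw [E4 hmeas hindep hL4 hmean hvar hm4, E4split]
    ring
  calc (∑ p : Fin n × Fin n, ∑ q : Fin n × Fin n, (M p.1 p.2 * M q.1 q.2) *
          ∫ ω, v p.1 ω * v p.2 ω * v q.1 ω * v q.2 ω) - (σ2 * ∑ i, M i i) ^ 2
      = ((∑ p : Fin n × Fin n, ∑ q : Fin n × Fin n, (M p.1 p.2 * M q.1 q.2) *
          (if (p.1:ℕ) = p.2 ∧ (q.1:ℕ) = q.2 ∧ (p.1:ℕ) = q.1 then μ4 - 3 * σ2 ^ 2 else 0))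
        + (∑ p : Fin n × Fin n, ∑ q : Fin n × Fin n, (M p.1 p.2 * M q.1 q.2) *
          (if (p.1:ℕ) = q.1 ∧ (p.2:ℕ) = q.2 then σ2 ^ 2 else 0))
        + (∑ p : Fin n × Fin n, ∑ q : Fin n × Fin n, (M p.1 p.2 * M q.1 q.2) *
          (if (p.1:ℕ) = q.2 ∧ (p.2:ℕ) = q.1 then σ2 ^ 2 else 0))
        + (∑ p : Fin n × Fin n, ∑ q : Fin n × Fin n, (M p.1 p.2 * M q.1 q.2) *
          ((if (p.1:ℕ) = p.2 then σ2 else 0) * (if (q.1:ℕ) = q.2 then σ2 else 0))))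
        - (σ2 * ∑ i, M i i) ^ 2 := by
        congr 1
        rw [Finset.sum_congr rfl fun p _ => Finset.sum_congr rfl fun q _ => h3 p q]
        simp only [Finset.sum_add_distrib]
    _ = (μ4 - 3 * σ2 ^ 2) * ∑ i, M i i ^ 2
        + σ2 ^ 2 * ∑ p : Fin n × Fin n, M p.1 p.2 ^ 2
        + σ2 ^ 2 * ∑ p : Fin n × Fin n, M p.1 p.2 * M p.2 p.1 := by
        rw [sumlem1, sumlem2, sumlem3, sumlem4]
        ring

end helpers

/-- L² law of large numbers for quadratic forms with uniformly bounded matrices: if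
`‖B_n‖_1 ≤ c` and `‖B_n‖_∞ ≤ c` for all `n` and the `v_i` are i.i.d. with mean `0`,
variance `σ²` and fourth moment `μ₄ < ∞`, then
`Var(V_n'B_nV_n) ≤ (|μ₄ − 3σ⁴| + 2σ⁴)c²n`, hence
`E[((1/n)(V_n'B_nV_n − σ²tr B_n))²] ≤ (|μ₄ − 3σ⁴| + 2σ⁴)c²/n → 0`, and in particular
`(1/n)(V_n'B_nV_n − σ²tr B_n) → 0` in probability. -/
theorem lln_quadratic_forms
    {Ω : Type*} [MeasureSpace Ω] [IsProbabilityMeasure (volume : Measure Ω)]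
    (v : ℕ → Ω → ℝ) (σ2 μ4 c : ℝ)
    (hmeas : ∀ i, Measurable (v i))
    (hindep : iIndepFun v volume)
    (hident : ∀ i j, IdentDistrib (v i) (v j) volume volume)
    (hL4 : ∀ i, MemLp (v i) 4 volume)
    (hmean : ∀ i, (∫ ω, v i ω) = 0)
    (hvar : ∀ i, (∫ ω, (v i ω) ^ 2) = σ2)
    (hm4 : ∀ i, (∫ ω, (v i ω) ^ 4) = μ4)
    (B : (n : ℕ) → Matrix (Fin n) (Fin n) ℝ)
    (hB1 : ∀ n, colSumNorm (B n) ≤ c)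
    (hBinf : ∀ n, rowSumNorm (B n) ≤ c) :
    let Qf : (n : ℕ) → Ω → ℝ := fun n ω =>
      dotProduct (fun i : Fin n => v i ω) ((B n).mulVec fun i : Fin n => v i ω)
    (∀ n : ℕ, variance (Qf n) volume ≤ (|μ4 - 3 * σ2 ^ 2| + 2 * σ2 ^ 2) * c ^ 2 * n)
    ∧ (∀ n : ℕ, (∫ ω, ((1 / (n : ℝ)) * (Qf n ω - σ2 * Matrix.trace (B n))) ^ 2)
        ≤ (|μ4 - 3 * σ2 ^ 2| + 2 * σ2 ^ 2) * c ^ 2 / n)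
    ∧ Tendsto (fun n : ℕ => ∫ ω, ((1 / (n : ℝ)) * (Qf n ω - σ2 * Matrix.trace (B n))) ^ 2)
        atTop (nhds 0)
    ∧ TendstoInMeasure volume
        (fun (n : ℕ) ω => (1 / (n : ℝ)) * (Qf n ω - σ2 * Matrix.trace (B n))) atTop 0 := by
  intro Qf
  classical
  -- basic positivity of c
  have hc0 : 0 ≤ c := by
    have h := hB1 0
    simp only [colSumNorm] at h
    rwa [Real.iSup_of_isEmpty] at h
  -- row/column/entry bounds
  have hBinf' : ∀ n, (⨆ i, ∑ j, |B n i j|) ≤ c := by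
    intro n
    have h := hBinf n
    simpa [rowSumNorm] using h
  have hrow : ∀ n (i : Fin n), (∑ j, |B n i j|) ≤ c := fun n i =>
    le_trans (le_ciSup (f := fun i : Fin n => ∑ j, |B n i j|)
      (Set.Finite.bddAbove (Set.finite_range _)) i) (hBinf' n)
  have hentry : ∀ n (i j : Fin n), |B n i j| ≤ c := fun n i j =>
    le_trans (Finset.single_le_sum (fun k _ => abs_nonneg (B n i k)) (Finset.mem_univ j))
      (hrow n i)
  -- sum bounds
  have hD0 : ∀ n, 0 ≤ ∑ i, (B n) i i ^ 2 := fun n =>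
    Finset.sum_nonneg fun i _ => sq_nonneg _
  have hD : ∀ n, (∑ i, (B n) i i ^ 2) ≤ c ^ 2 * n := by
    intro n
    calc (∑ i, (B n) i i ^ 2) ≤ ∑ _i : Fin n, c ^ 2 :=
          Finset.sum_le_sum fun i _ => by
            rw [← sq_abs]
            exact pow_le_pow_left₀ (abs_nonneg _) (hentry n i i) 2
      _ = c ^ 2 * n := by simp [Finset.sum_const, mul_comm]
  have hrowsq : ∀ n (i : Fin n), (∑ j, (B n) i j ^ 2) ≤ c * c := by
    intro n i
    calc (∑ j, (B n) i j ^ 2) ≤ ∑ j, c * |B n i j| :=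
          Finset.sum_le_sum fun j _ => by
            rw [← sq_abs, sq]
            exact mul_le_mul_of_nonneg_right (hentry n i j) (abs_nonneg _)
      _ = c * ∑ j, |B n i j| := by rw [Finset.mul_sum]
      _ ≤ c * c := mul_le_mul_of_nonneg_left (hrow n i) hc0
  have hS2 : ∀ n, (∑ p : Fin n × Fin n, (B n) p.1 p.2 ^ 2) ≤ c ^ 2 * n := by
    intro n
    rw [Fintype.sum_prod_type]
    calc (∑ i : Fin n, ∑ j, (B n) i j ^ 2) ≤ ∑ _i : Fin n, c * c :=
          Finset.sum_le_sum fun i _ => hrowsq n i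
      _ = c ^ 2 * n := by simp [Finset.sum_const, sq, mul_comm]
  have hS3 : ∀ n, |∑ p : Fin n × Fin n, (B n) p.1 p.2 * (B n) p.2 p.1| ≤ c ^ 2 * n := by
    intro n
    calc |∑ p : Fin n × Fin n, (B n) p.1 p.2 * (B n) p.2 p.1|
        ≤ ∑ p : Fin n × Fin n, |(B n) p.1 p.2 * (B n) p.2 p.1| :=
          Finset.abs_sum_le_sum_abs _ _
      _ ≤ ∑ p : Fin n × Fin n, c * |(B n) p.1 p.2| := by
          refine Finset.sum_le_sum fun p _ => ?_
          rw [abs_mul, mul_comm]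
          exact mul_le_mul_of_nonneg_right (hentry n p.2 p.1) (abs_nonneg _)
      _ = c * ∑ p : Fin n × Fin n, |(B n) p.1 p.2| := by rw [Finset.mul_sum]
      _ ≤ c * (c * n) := by
          refine mul_le_mul_of_nonneg_left ?_ hc0
          rw [Fintype.sum_prod_type]
          calc (∑ i : Fin n, ∑ j, |(B n) i j|) ≤ ∑ _i : Fin n, c :=
                Finset.sum_le_sum fun i _ => hrow n i
            _ = c * n := by simp [Finset.sum_const, mul_comm]
      _ = c ^ 2 * n := by ring
  -- rewrite Qf
  have hQeq : ∀ n, Qf n = fun ω => ∑ p : Fin n × Fin n, (B n) p.1 p.2 * (v p.1 ω * v p.2 ω) := by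
    intro n
    funext ω
    show dotProduct (fun i : Fin n => v i ω) ((B n).mulVec fun i : Fin n => v i ω) = _
    rw [Fintype.sum_prod_type]
    simp only [dotProduct, Matrix.mulVec, Finset.mul_sum]
    exact Finset.sum_congr rfl fun i _ => Finset.sum_congr rfl fun j _ => by ring
  have htr : ∀ n, Matrix.trace (B n) = ∑ i, (B n) i i := by
    intro n; simp [Matrix.trace, Matrix.diag]
  have hmemQf : ∀ n, MemLp (Qf n) 2 volume := fun n =>
    (hQeq n) ▸ memQ hmeas hindep hL4 hmean hvar hm4 n (B n)
  have hvarQf : ∀ n, variance (Qf n) volume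
      = (μ4 - 3 * σ2 ^ 2) * ∑ i, (B n) i i ^ 2
        + σ2 ^ 2 * ∑ p : Fin n × Fin n, (B n) p.1 p.2 ^ 2
        + σ2 ^ 2 * ∑ p : Fin n × Fin n, (B n) p.1 p.2 * (B n) p.2 p.1 := by
    intro n
    rw [hQeq n]
    exact varQ hmeas hindep hL4 hmean hvar hm4 n (B n)
  -- part 1
  have part1 : ∀ n : ℕ, variance (Qf n) volume
      ≤ (|μ4 - 3 * σ2 ^ 2| + 2 * σ2 ^ 2) * c ^ 2 * n := by
    intro n
    rw [hvarQf n]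
    have h1 : (μ4 - 3 * σ2 ^ 2) * ∑ i, (B n) i i ^ 2 ≤ |μ4 - 3 * σ2 ^ 2| * (c ^ 2 * n) :=
      le_trans (mul_le_mul_of_nonneg_right (le_abs_self _) (hD0 n))
        (mul_le_mul_of_nonneg_left (hD n) (abs_nonneg _))
    have h2 : σ2 ^ 2 * ∑ p : Fin n × Fin n, (B n) p.1 p.2 ^ 2 ≤ σ2 ^ 2 * (c ^ 2 * n) :=
      mul_le_mul_of_nonneg_left (hS2 n) (sq_nonneg _)
    have h3 : σ2 ^ 2 * ∑ p : Fin n × Fin n, (B n) p.1 p.2 * (B n) p.2 p.1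
        ≤ σ2 ^ 2 * (c ^ 2 * n) :=
      mul_le_mul_of_nonneg_left ((le_abs_self _).trans (hS3 n)) (sq_nonneg _)
    calc (μ4 - 3 * σ2 ^ 2) * ∑ i, (B n) i i ^ 2
          + σ2 ^ 2 * ∑ p : Fin n × Fin n, (B n) p.1 p.2 ^ 2
          + σ2 ^ 2 * ∑ p : Fin n × Fin n, (B n) p.1 p.2 * (B n) p.2 p.1
        ≤ |μ4 - 3 * σ2 ^ 2| * (c ^ 2 * n) + σ2 ^ 2 * (c ^ 2 * n) + σ2 ^ 2 * (c ^ 2 * n) :=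
          add_le_add (add_le_add h1 h2) h3
      _ = (|μ4 - 3 * σ2 ^ 2| + 2 * σ2 ^ 2) * c ^ 2 * n := by ring
  -- mean of Qf
  have hEQf : ∀ n, (∫ ω, Qf n ω) = σ2 * Matrix.trace (B n) := by
    intro n
    simp only [hQeq n]
    rw [meanQ hmeas hindep hL4 hmean hvar hm4 n (B n), htr n]
  -- part 2
  have part2 : ∀ n : ℕ, (∫ ω, ((1 / (n : ℝ)) * (Qf n ω - σ2 * Matrix.trace (B n))) ^ 2)
      ≤ (|μ4 - 3 * σ2 ^ 2| + 2 * σ2 ^ 2) * c ^ 2 / n := by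
    intro n
    rcases Nat.eq_zero_or_pos n with rfl | hn
    · simp
    · have hn0 : (n : ℝ) ≠ 0 := Nat.cast_ne_zero.mpr hn.ne'
      have h2 : (∫ ω, ((1 / (n : ℝ)) * (Qf n ω - σ2 * Matrix.trace (B n))) ^ 2)
          = (1 / (n : ℝ)) ^ 2 * variance (Qf n) volume := by
        rw [variance_eq_integral (hmemQf n).aestronglyMeasurable.aemeasurable]
        calc (∫ ω, ((1 / (n : ℝ)) * (Qf n ω - σ2 * Matrix.trace (B n))) ^ 2)
            = ∫ ω, (1 / (n : ℝ)) ^ 2 * (((Qf n - fun _ => ∫ x, Qf n x : Ω → ℝ)) ^ 2) ω := by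
              congr 1
              funext ω
              rw [hEQf n]
              simp only [Pi.pow_apply, Pi.sub_apply]
              ring
          _ = (1 / (n : ℝ)) ^ 2 * ∫ ω, (((Qf n - fun _ => ∫ x, Qf n x : Ω → ℝ)) ^ 2) ω :=
              integral_const_mul _ _
      rw [h2]
      calc (1 / (n : ℝ)) ^ 2 * variance (Qf n) volume
          ≤ (1 / (n : ℝ)) ^ 2 * ((|μ4 - 3 * σ2 ^ 2| + 2 * σ2 ^ 2) * c ^ 2 * n) :=
            mul_le_mul_of_nonneg_left (part1 n) (sq_nonneg _)
        _ = (|μ4 - 3 * σ2 ^ 2| + 2 * σ2 ^ 2) * c ^ 2 / n := by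
            field_simp
  -- part 3
  have part3 : Tendsto (fun n : ℕ =>
      ∫ ω, ((1 / (n : ℝ)) * (Qf n ω - σ2 * Matrix.trace (B n))) ^ 2) atTop (nhds 0) := by
    refine squeeze_zero (fun n => integral_nonneg fun ω => sq_nonneg _) part2 ?_
    exact tendsto_const_div_atTop_nhds_zero_nat _
  refine ⟨part1, part2, part3, ?_⟩
  -- part 4
  rw [tendstoInMeasure_iff_dist]; intro ε hε
  have hmemf : ∀ n : ℕ, MemLp (fun ω => (1 / (n : ℝ)) * (Qf n ω - σ2 * Matrix.trace (B n)))
      2 volume := fun n => ((hmemQf n).sub (memLp_const _)).const_mul _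
  have hmeanf : ∀ n : ℕ, (∫ ω, (1 / (n : ℝ)) * (Qf n ω - σ2 * Matrix.trace (B n))) = 0 := by
    intro n
    rw [integral_const_mul, integral_sub ((hmemQf n).integrable one_le_two) (integrable_const _),
      hEQf n]
    simp
  have hvarf : ∀ n : ℕ, variance
        (fun ω => (1 / (n : ℝ)) * (Qf n ω - σ2 * Matrix.trace (B n))) volume
      = ∫ ω, ((1 / (n : ℝ)) * (Qf n ω - σ2 * Matrix.trace (B n))) ^ 2 := by
    intro n
    rw [variance_of_integral_eq_zero (hmemf n).aestronglyMeasurable.aemeasurable (hmeanf n)]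
  have cheb : ∀ n : ℕ, (volume : Measure Ω)
        {ω | ε ≤ dist ((1 / (n : ℝ)) * (Qf n ω - σ2 * Matrix.trace (B n))) ((0 : Ω → ℝ) ω)}
      ≤ ENNReal.ofReal
          ((∫ ω, ((1 / (n : ℝ)) * (Qf n ω - σ2 * Matrix.trace (B n))) ^ 2) / ε ^ 2) := by
    intro n
    have h := meas_ge_le_variance_div_sq (hmemf n) hε
    rw [hmeanf n, hvarf n] at h
    simpa only [Pi.zero_apply, Real.dist_eq, sub_zero] using h
  have hupper : Tendsto (fun n : ℕ => ENNReal.ofReal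
      ((∫ ω, ((1 / (n : ℝ)) * (Qf n ω - σ2 * Matrix.trace (B n))) ^ 2) / ε ^ 2))
      atTop (nhds 0) := by
    have h0 : Tendsto (fun n : ℕ =>
        (∫ ω, ((1 / (n : ℝ)) * (Qf n ω - σ2 * Matrix.trace (B n))) ^ 2) / ε ^ 2)
        atTop (nhds 0) := by
      simpa using part3.div_const (ε ^ 2)
    simpa using ENNReal.tendsto_ofReal h0
  exact tendsto_of_tendsto_of_tendsto_of_le_of_le tendsto_const_nhds hupper
    (fun n => zero_le) cheb
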